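/- For all reals A > 1 and B > 1, the function P(t) = sinh(t·log A) · sinh(t·log B) / ( t · sinh(t·log(A·B)) ) is strictly decreasing on (0, ∞). Consequently, for 0 < r₁ < R₂ < r₂ and positive integers n, m, one has p₂(n) = p₂(m) if and only if n = m, where p₂(t) = R₂² · sinh(t·log(R₂/r₁)) · sinh(t·log(r₂/R₂)) / ( t · sinh(t·log(r₂/r₁)) ). -/

import Mathlib

open Real Set

lemma lemA {x : ℝ} (hx : 0 < x) : Real.sinh x < x * Real.cosh x := by
  have h : StrictMonoOn (fun x : ℝ => x * Real.cosh x - Real.sinh x) (Set.Ici 0) := by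
    apply strictMonoOn_of_deriv_pos (convex_Ici 0)
    · fun_prop
    · intro x hx
      rw [interior_Ici] at hx
      have hd : HasDerivAt (fun x : ℝ => x * Real.cosh x - Real.sinh x) (x * Real.sinh x) x := by
        have := ((hasDerivAt_id x).mul (Real.hasDerivAt_cosh x)).sub (Real.hasDerivAt_sinh x)
        refine this.congr_deriv ?_
        simp only [id]
        ring
      rw [hd.deriv]
      exact mul_pos hx (Real.sinh_pos_iff.mpr hx)
  have := h (Set.self_mem_Ici) (Set.mem_Ici.mpr hx.le) hx
  simp only [Real.sinh_zero, Real.cosh_zero] at this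
  linarith

lemma lemB {u v : ℝ} (hu : 0 < u) (huv : u < v) : v * Real.sinh u < u * Real.sinh v := by
  have h : StrictMonoOn (fun v : ℝ => u * Real.sinh v - v * Real.sinh u) (Set.Ici u) := by
    apply strictMonoOn_of_deriv_pos (convex_Ici u)
    · fun_prop
    · intro x hx
      rw [interior_Ici] at hx
      have hd : HasDerivAt (fun v : ℝ => u * Real.sinh v - v * Real.sinh u)
          (u * Real.cosh x - Real.sinh u) x := by
        have := ((hasDerivAt_const x u).mul (Real.hasDerivAt_sinh x)).sub
          ((hasDerivAt_id x).mul_const (Real.sinh u))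
        refine this.congr_deriv ?_
        ring
      rw [hd.deriv]
      have h1 : Real.sinh u < u * Real.cosh u := lemA hu
      have h2 : Real.cosh u < Real.cosh x := by
        rw [Real.cosh_lt_cosh]
        simp [abs_of_pos hu, abs_of_pos (hu.trans hx)]
        exact hx
      nlinarith
  have := h (Set.self_mem_Ici) (Set.mem_Ici.mpr huv.le) huv
  simp only at this
  linarith

lemma lemC {x y : ℝ} (hx : 0 < x) (hxy : x < y) :
    x * Real.cosh x * Real.sinh y < y * Real.cosh y * Real.sinh x := by
  have h := lemB (u := y - x) (v := x + y) (by linarith) (by linarith)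
  rw [Real.sinh_sub, Real.sinh_add] at h
  nlinarith

/-- for A, B > 1 the function
t ↦ sinh(t log A) sinh(t log B) / (t sinh(t log(AB))) is strictly decreasing on
(0,∞); consequently p₂(n) = p₂(m) iff n = m for positive integers n, m. -/
lemma mainP {A B : ℝ} (hA : 1 < A) (hB : 1 < B) :
    StrictAntiOn (fun t : ℝ =>
      Real.sinh (t * Real.log A) * Real.sinh (t * Real.log B) /
        (t * Real.sinh (t * Real.log (A * B)))) (Set.Ioi (0:ℝ)) := by
  have ha : 0 < Real.log A := Real.log_pos hA
  have hb : 0 < Real.log B := Real.log_pos hB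
  set a := Real.log A with ha'
  set b := Real.log B with hb'
  have hab : Real.log (A * B) = a + b := Real.log_mul (by linarith) (by linarith)
  intro s hs t ht hst
  simp only [Set.mem_Ioi] at hs ht
  simp only [hab]
  have hsa := Real.sinh_pos_iff.mpr (mul_pos hs ha)
  have hsb := Real.sinh_pos_iff.mpr (mul_pos hs hb)
  have hta := Real.sinh_pos_iff.mpr (mul_pos ht ha)
  have htb := Real.sinh_pos_iff.mpr (mul_pos ht hb)
  have e1 : Real.sinh (s * (a + b))
      = Real.sinh (s*a) * Real.cosh (s*b) + Real.cosh (s*a) * Real.sinh (s*b) := by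
    rw [mul_add, Real.sinh_add]
  have e2 : Real.sinh (t * (a + b))
      = Real.sinh (t*a) * Real.cosh (t*b) + Real.cosh (t*a) * Real.sinh (t*b) := by
    rw [mul_add, Real.sinh_add]
  have hds : 0 < s * Real.sinh (s * (a + b)) :=
    mul_pos hs (Real.sinh_pos_iff.mpr (mul_pos hs (by linarith)))
  have hdt : 0 < t * Real.sinh (t * (a + b)) :=
    mul_pos ht (Real.sinh_pos_iff.mpr (mul_pos ht (by linarith)))
  rw [div_lt_div_iff₀ hdt hds]
  have hc1 := lemC (mul_pos hs hb) (mul_lt_mul_of_pos_right hst hb)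
  have hc2 := lemC (mul_pos hs ha) (mul_lt_mul_of_pos_right hst ha)
  have h1' : s * Real.cosh (s*b) * Real.sinh (t*b) < t * Real.cosh (t*b) * Real.sinh (s*b) := by
    nlinarith [hc1, hb]
  have h2' : s * Real.cosh (s*a) * Real.sinh (t*a) < t * Real.cosh (t*a) * Real.sinh (s*a) := by
    nlinarith [hc2, ha]
  have m1 := mul_lt_mul_of_pos_left h1' (mul_pos hsa hta)
  have m2 := mul_lt_mul_of_pos_left h2' (mul_pos hsb htb)
  rw [e1, e2]
  nlinarith [m1, m2]

theorem stmt_7 :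
    (∀ A B : ℝ, 1 < A → 1 < B →
      StrictAntiOn (fun t : ℝ =>
        Real.sinh (t * Real.log A) * Real.sinh (t * Real.log B) /
          (t * Real.sinh (t * Real.log (A * B)))) (Set.Ioi (0:ℝ))) ∧
    (∀ r₁ R₂ r₂ : ℝ, 0 < r₁ → r₁ < R₂ → R₂ < r₂ →
      ∀ n m : ℕ, 0 < n → 0 < m →
        ((R₂^2 * Real.sinh ((n:ℝ) * Real.log (R₂ / r₁)) *
            Real.sinh ((n:ℝ) * Real.log (r₂ / R₂)) /
            ((n:ℝ) * Real.sinh ((n:ℝ) * Real.log (r₂ / r₁)))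
          = R₂^2 * Real.sinh ((m:ℝ) * Real.log (R₂ / r₁)) *
            Real.sinh ((m:ℝ) * Real.log (r₂ / R₂)) /
            ((m:ℝ) * Real.sinh ((m:ℝ) * Real.log (r₂ / r₁)))) ↔ n = m)) := by
  constructor
  · intro A B hA hB
    exact mainP hA hB
  · intro r₁ R₂ r₂ h1 h2 h3 n m hn hm
    have hA : 1 < R₂ / r₁ := (one_lt_div h1).mpr h2
    have hB : 1 < r₂ / R₂ := (one_lt_div (h1.trans h2)).mpr h3
    have hR2 : (0:ℝ) < R₂ := h1.trans h2
    have hAB : (R₂/r₁) * (r₂/R₂) = r₂/r₁ := by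
      field_simp
    constructor
    · intro h
      have key := (mainP hA hB).injOn
      have hnm : ((n:ℝ)) = ((m:ℝ)) := by
        apply key (Set.mem_Ioi.mpr (by exact_mod_cast hn)) (Set.mem_Ioi.mpr (by exact_mod_cast hm))
        show Real.sinh (↑n * Real.log (R₂/r₁)) * Real.sinh (↑n * Real.log (r₂/R₂)) /
            (↑n * Real.sinh (↑n * Real.log ((R₂/r₁) * (r₂/R₂))))
          = Real.sinh (↑m * Real.log (R₂/r₁)) * Real.sinh (↑m * Real.log (r₂/R₂)) /
            (↑m * Real.sinh (↑m * Real.log ((R₂/r₁) * (r₂/R₂))))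
        rw [hAB]
        have h' : R₂^2 * (Real.sinh ((n:ℝ) * Real.log (R₂ / r₁)) *
              Real.sinh ((n:ℝ) * Real.log (r₂ / R₂)) /
              ((n:ℝ) * Real.sinh ((n:ℝ) * Real.log (r₂ / r₁))))
            = R₂^2 * (Real.sinh ((m:ℝ) * Real.log (R₂ / r₁)) *
              Real.sinh ((m:ℝ) * Real.log (r₂ / R₂)) /
              ((m:ℝ) * Real.sinh ((m:ℝ) * Real.log (r₂ / r₁)))) := by
          rw [← mul_div_assoc, ← mul_div_assoc, ← mul_assoc, ← mul_assoc]
          exact h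
        exact mul_left_cancel₀ (by positivity) h'
      exact_mod_cast hnm
    · rintro rfl
      rfl
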